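/- arXiv:2302.07464 — 5 statements merged into one kernel-verified Lean document; each statement's English description precedes it below -/
import Mathlib

section
/- Let M ∈ ℝ^{m×n} and ψ = ρ_m ∘ M : ℝⁿ → 𝕋^m. Then the image ψ(ℝⁿ) is dense in 𝕋^m if and only if the rows of M are linearly independent over ℚ. -/
open MeasureTheory Complex Set

noncomputable section
namespace Kron

instance : Fact ((0:ℝ) < 1) := ⟨one_pos⟩

abbrev Tc := AddCircle (1:ℝ)
abbrev G (m : ℕ) := Fin m → Tc

variable {m : ℕ}

def E (k : Fin m → ℤ) : C(G m, ℂ) :=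
  ∏ i, (fourier (k i)).comp ⟨fun y => y i, continuous_apply i⟩

lemma E_apply (k : Fin m → ℤ) (y : G m) : E k y = ∏ i, fourier (k i) (y i) := by
  simp [E]

lemma fourier_arg_add {n : ℤ} (a b : Tc) : fourier n (a + b) = fourier n a * fourier n b := by
  rw [fourier_apply, fourier_apply, fourier_apply, zsmul_add, AddCircle.toCircle_add]
  simp

lemma E_add (k : Fin m → ℤ) (y z : G m) : E k (y + z) = E k y * E k z := by
  simp only [E_apply, Pi.add_apply, fourier_arg_add]
  rw [Finset.prod_mul_distrib]

lemma E_mul (k l : Fin m → ℤ) : E k * E l = E (k + l) := by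
  ext y
  simp [E_apply, Pi.add_apply, ← fourier_add, Finset.prod_mul_distrib]

lemma E_zero : E (0 : Fin m → ℤ) = 1 := by
  ext y
  simp [E_apply, fourier_zero]

lemma E_star (k : Fin m → ℤ) : star (E k) = E (-k) := by
  ext y
  simp [E_apply, ← fourier_neg, map_prod]

end Kron

namespace Kron
variable {m n : ℕ}

lemma E_coe (k : Fin m → ℤ) (v : Fin m → ℝ) :
    E k (fun i => (v i : Tc)) = Complex.exp (2 * Real.pi * I * ∑ i, (k i : ℝ) * v i) := by
  rw [E_apply]
  simp_rw [fourier_coe_apply]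
  rw [← Complex.exp_sum]
  congr 1
  push_cast
  rw [Finset.mul_sum]
  refine Finset.sum_congr rfl fun i _ => by ring

lemma exp_half_ne_one {c : ℝ} (hc : c ≠ 0) :
    Complex.exp (2 * Real.pi * I * ((c * (2 * c)⁻¹ : ℝ) : ℂ)) ≠ 1 := by
  have h2 : (c * (2 * c)⁻¹ : ℝ) = 1 / 2 := by field_simp
  rw [h2]
  have h3 : (2 * Real.pi * I * (((1:ℝ) / 2 : ℝ) : ℂ)) = Real.pi * I := by push_cast; ring
  rw [h3, Complex.exp_pi_mul_I]
  norm_num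

/-- If the character `E k` is trivial on the image of `M`, then `kᵀM = 0`. -/
lemma vecMul_eq_zero_of (M : Matrix (Fin m) (Fin n) ℝ) (k : Fin m → ℤ)
    (h : ∀ x : Fin n → ℝ, E k (fun i => ((M.mulVec x i : ℝ) : Tc)) = 1) :
    Matrix.vecMul (fun i => (k i : ℝ)) M = 0 := by
  funext j
  by_contra hc
  set c : ℝ := Matrix.vecMul (fun i => (k i : ℝ)) M j with hcdef
  have h1 := h (Pi.single j (2 * c)⁻¹)
  rw [E_coe] at h1
  have hsum : (∑ i, (k i : ℝ) * M.mulVec (Pi.single j (2 * c)⁻¹) i) = c * (2 * c)⁻¹ := by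
    have : (∑ i, (k i : ℝ) * M.mulVec (Pi.single j (2 * c)⁻¹) i)
        = dotProduct (fun i => (k i : ℝ)) (M.mulVec (Pi.single j (2 * c)⁻¹)) := rfl
    rw [this, Matrix.dotProduct_mulVec, dotProduct_single]
  rw [hsum] at h1
  exact exp_half_ne_one hc h1

/-- If the character `E k` is trivial on the whole torus, then `k = 0`. -/
lemma k_eq_zero_of (k : Fin m → ℤ) (h : ∀ y : G m, E k y = 1) : k = 0 := by
  funext j
  by_contra hc
  have hcr : ((k j : ℝ)) ≠ 0 := Int.cast_ne_zero.mpr hc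
  have h1 := h (fun i => ((Pi.single j (2 * (k j : ℝ))⁻¹ : Fin m → ℝ) i : Tc))
  rw [E_coe] at h1
  have hsum : (∑ i, (k i : ℝ) * (Pi.single j (2 * (k j : ℝ))⁻¹ : Fin m → ℝ) i)
      = (k j : ℝ) * (2 * (k j : ℝ))⁻¹ := by
    rw [Finset.sum_eq_single j (fun b _ hb => by simp [Pi.single_eq_of_ne hb])
      (fun h' => absurd (Finset.mem_univ j) h'), Pi.single_eq_same]
  rw [hsum] at h1
  exact exp_half_ne_one hcr h1

end Kron

namespace Kron
variable {m : ℕ}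

open Submodule in
/-- The star subalgebra generated by the characters `E k`. -/
def torusAlg (m : ℕ) : StarSubalgebra ℂ C(G m, ℂ) where
  toSubalgebra := Algebra.adjoin ℂ (Set.range (E (m := m)))
  star_mem' := by
    show Algebra.adjoin ℂ (Set.range (E (m := m))) ≤
      star (Algebra.adjoin ℂ (Set.range (E (m := m))))
    refine Algebra.adjoin_le ?_
    rintro - ⟨k, rfl⟩
    show star (E k) ∈ Algebra.adjoin ℂ (Set.range (E (m := m)))
    exact Algebra.subset_adjoin ⟨-k, (E_star k).symm⟩

open Submodule in
theorem torusAlg_coe (m : ℕ) :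
    Subalgebra.toSubmodule (torusAlg m).toSubalgebra = span ℂ (Set.range (E (m := m))) := by
  apply Algebra.adjoin_eq_span_of_subset
  refine Set.Subset.trans ?_ Submodule.subset_span
  intro x hx
  refine Submonoid.closure_induction (fun _ => id) ⟨0, E_zero⟩ ?_ hx
  rintro - - - - ⟨k, rfl⟩ ⟨l, rfl⟩
  exact ⟨k + l, (E_mul k l).symm⟩

theorem torusAlg_separatesPoints (m : ℕ) : (torusAlg m).SeparatesPoints := by
  intro x y hxy
  obtain ⟨i, hi⟩ : ∃ i, x i ≠ y i := by
    by_contra hc; push_neg at hc; exact hxy (funext hc)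
  refine ⟨_, ⟨E (Pi.single i 1), Algebra.subset_adjoin ⟨Pi.single i 1, rfl⟩, rfl⟩, ?_⟩
  have hval : ∀ z : G m, E (Pi.single i 1) z = fourier 1 (z i) := by
    intro z
    rw [E_apply, Finset.prod_eq_single i (fun b _ hb => by
      simp [Pi.single_eq_of_ne hb, fourier_zero]) (fun h' => absurd (Finset.mem_univ i) h'),
      Pi.single_eq_same]
  dsimp only
  rw [hval, hval, fourier_one, fourier_one]
  intro hc
  rw [Circle.coe_inj] at hc
  exact hi (AddCircle.injective_toCircle one_ne_zero hc)

theorem torusAlg_closure_eq_top (m : ℕ) : (torusAlg m).topologicalClosure = ⊤ :=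
  ContinuousMap.starSubalgebra_topologicalClosure_eq_top_of_separatesPoints _
    (torusAlg_separatesPoints m)

end Kron

open Kron Submodule in
/-- For `M ∈ ℝ^{m×n}` and `ψ = ρ_m ∘ M : ℝⁿ → 𝕋^m`, the image `ψ(ℝⁿ)` is dense
in `𝕋^m` iff the rows of `M` are linearly independent over `ℚ`, i.e. iff
`kᵀM = 0` with `k ∈ ℤ^m` implies `k = 0`. -/
theorem stmt1 (m n : ℕ) (M : Matrix (Fin m) (Fin n) ℝ) :
    Dense (Set.range fun x : Fin n → ℝ =>
        fun i => ((M.mulVec x i : ℝ) : AddCircle (1 : ℝ)))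
      ↔ ∀ k : Fin m → ℤ, Matrix.vecMul (fun i => (k i : ℝ)) M = 0 → k = 0 := by
  set ψ : (Fin n → ℝ) → G m := fun x => fun i => ((M.mulVec x i : ℝ) : Tc) with hψ
  constructor
  · intro hd k hkM
    have hE1 : ∀ x : Fin n → ℝ, E k (ψ x) = 1 := by
      intro x
      rw [hψ, E_coe]
      have : (∑ i, (k i : ℝ) * M.mulVec x i) = 0 := by
        have h1 : (∑ i, (k i : ℝ) * M.mulVec x i)
            = dotProduct (fun i => (k i : ℝ)) (M.mulVec x) := rfl
        rw [h1, Matrix.dotProduct_mulVec, hkM, zero_dotProduct]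
      rw [this]
      simp
    have heq : ∀ y : G m, E k y = 1 := by
      have : (E k : G m → ℂ) = (1 : C(G m, ℂ)) := by
        refine Continuous.ext_on hd (E k).continuous continuous_const ?_
        rintro - ⟨x, rfl⟩
        exact hE1 x
      intro y; exact congrFun this y
    exact k_eq_zero_of k heq
  · intro hk
    by_contra hnd
    obtain ⟨y₀, hy₀⟩ : ∃ y₀ : G m, y₀ ∉ closure (Set.range ψ) := by
      by_contra hc; push_neg at hc; exact hnd hc
    -- the range is a subgroup
    have hψ0 : ψ 0 = 0 := by
      funext i; simp [hψ, Matrix.mulVec_zero]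
    have hψadd : ∀ x y, ψ (x + y) = ψ x + ψ y := by
      intro x y; funext i
      simp [hψ, Matrix.mulVec_add]
    have hψneg : ∀ x, ψ (-x) = -ψ x := by
      intro x; funext i
      simp [hψ, Matrix.mulVec_neg]
    set H : AddSubgroup (G m) :=
      { carrier := Set.range ψ
        zero_mem' := ⟨0, hψ0⟩
        add_mem' := by rintro - - ⟨x, rfl⟩ ⟨y, rfl⟩; exact ⟨x + y, hψadd x y⟩
        neg_mem' := by rintro - ⟨x, rfl⟩; exact ⟨-x, hψneg x⟩ } with hH
    set K : AddSubgroup (G m) := H.topologicalClosure with hK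
    have hKcar : (K : Set (G m)) = closure (Set.range ψ) := rfl
    letI : MeasurableSpace ↥K := borel _
    haveI : BorelSpace ↥K := ⟨rfl⟩
    haveI : CompactSpace ↥K := isCompact_iff_compactSpace.mp (H.isClosed_topologicalClosure.isCompact)
    haveI : Nonempty ↥K := ⟨⟨0, K.zero_mem⟩⟩
    set μ : Measure ↥K := Measure.addHaarMeasure (⊤ : TopologicalSpace.PositiveCompacts ↥K)
      with hμ
    haveI : μ.IsAddLeftInvariant := Measure.isAddLeftInvariant_addHaarMeasure ⊤
    have hintc : ∀ (f : C(G m, ℂ)) (y : G m), Integrable (fun z : ↥K => f (y + ↑z)) μ := by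
      intro f y
      exact (f.continuous.comp (continuous_const.add continuous_subtype_val)
        ).integrable_of_hasCompactSupport (HasCompactSupport.of_compactSpace _)
    -- membership of the range in K
    have hmemK : ∀ x : Fin n → ℝ, ψ x ∈ K := fun x =>
      H.le_topologicalClosure ⟨x, rfl⟩
    -- orthogonality: nontrivial characters integrate to zero on K
    have horth : ∀ k : Fin m → ℤ, k ≠ 0 → (∫ z : ↥K, E k (↑z) ∂μ) = 0 := by
      intro k hk0
      obtain ⟨x, hx⟩ : ∃ x : Fin n → ℝ, E k (ψ x) ≠ 1 := by
        by_contra hc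
        push_neg at hc
        exact hk0 (hk k (vecMul_eq_zero_of M k hc))
      set z₀ : ↥K := ⟨ψ x, hmemK x⟩ with hz₀
      have h1 := integral_add_left_eq_self (μ := μ) (fun z : ↥K => E k (↑z)) z₀
      have h2 : (∫ z : ↥K, E k (↑(z₀ + z)) ∂μ) = E k (ψ x) * ∫ z : ↥K, E k (↑z) ∂μ := by
        rw [← integral_const_mul]
        refine integral_congr_ae (Filter.Eventually.of_forall fun z => ?_)
        show E k (↑(z₀ + z)) = E k (ψ x) * E k ↑z
        have hc : ((z₀ + z : ↥K) : G m) = ψ x + ↑z := rfl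
        rw [hc, E_add]
      rw [h2] at h1
      by_contra hI
      have h3 : (E k (ψ x) - 1) * (∫ z : ↥K, E k (↑z) ∂μ) = 0 := by
        rw [sub_mul, one_mul, h1, sub_self]
      rcases mul_eq_zero.mp h3 with h4 | h4
      · exact hx (by linear_combination h4)
      · exact hI h4
    set L : C(G m, ℂ) → ℂ := fun f =>
      (∫ z : ↥K, f ((0 : G m) + ↑z) ∂μ) - ∫ z : ↥K, f (y₀ + ↑z) ∂μ with hLdef
    -- L vanishes on all characters
    have hLE : ∀ k : Fin m → ℤ, L (E k) = 0 := by
      intro k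
      by_cases hk0 : k = 0
      · subst hk0
        show (∫ z : ↥K, E (0 : Fin m → ℤ) ((0 : G m) + ↑z) ∂μ)
          - (∫ z : ↥K, E (0 : Fin m → ℤ) (y₀ + ↑z) ∂μ) = 0
        simp only [E_zero, ContinuousMap.one_apply, sub_self]
      · have h5 : (∫ z : ↥K, E k ((0 : G m) + ↑z) ∂μ) = 0 := by
          simp only [zero_add]
          exact horth k hk0
        have h6 : (∫ z : ↥K, E k (y₀ + ↑z) ∂μ) = 0 := by
          have h7 : (∫ z : ↥K, E k (y₀ + ↑z) ∂μ) = E k y₀ * ∫ z : ↥K, E k (↑z) ∂μ := by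
            rw [← integral_const_mul]
            refine integral_congr_ae (Filter.Eventually.of_forall fun z => ?_)
            show E k (y₀ + ↑z) = E k y₀ * E k ↑z
            rw [E_add]
          rw [h7, horth k hk0, mul_zero]
        show (∫ z : ↥K, E k ((0 : G m) + ↑z) ∂μ) - (∫ z : ↥K, E k (y₀ + ↑z) ∂μ) = 0
        rw [h5, h6, sub_zero]
    -- L vanishes on the span of the characters
    have hLspan : ∀ f ∈ span ℂ (Set.range (E (m := m))), L f = 0 := by
      intro f hf
      refine Submodule.span_induction ?_ ?_ ?_ ?_ hf
      · rintro - ⟨k, rfl⟩; exact hLE k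
      · rw [hLdef]; simp
      · intro f g _ _ hfL hgL
        have : L (f + g) = L f + L g := by
          rw [hLdef]
          simp only [ContinuousMap.add_apply]
          rw [integral_add (hintc f 0) (hintc g 0), integral_add (hintc f y₀) (hintc g y₀)]
          ring
        rw [this, hfL, hgL, add_zero]
      · intro c f _ hfL
        have : L (c • f) = c * L f := by
          rw [hLdef]
          simp only [ContinuousMap.smul_apply, smul_eq_mul]
          rw [integral_const_mul, integral_const_mul]
          ring
        rw [this, hfL, mul_zero]
    -- L is continuous
    have hlip : ∀ y : G m, Continuous (fun f : C(G m, ℂ) => ∫ z : ↥K, f (y + ↑z) ∂μ) := by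
      intro y
      refine (LipschitzWith.of_dist_le_mul (K := (μ Set.univ).toNNReal)
        (fun f g => ?_)).continuous
      rw [dist_eq_norm, ← integral_sub (hintc f y) (hintc g y)]
      have hb : ∀ z : ↥K, ‖f (y + ↑z) - g (y + ↑z)‖ ≤ dist f g := fun z => by
        rw [← dist_eq_norm]; exact ContinuousMap.dist_apply_le_dist _
      calc ‖∫ z : ↥K, (f (y + ↑z) - g (y + ↑z)) ∂μ‖
          ≤ dist f g * (μ Set.univ).toReal :=
            norm_integral_le_of_norm_le_const (Filter.Eventually.of_forall hb)
        _ = ↑(μ Set.univ).toNNReal * dist f g := by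
            rw [mul_comm]; rfl
    have hLcont : Continuous L := by
      rw [hLdef]
      exact (hlip (0 : G m)).sub (hlip y₀)
    -- L vanishes everywhere by Stone-Weierstrass
    have hzero : ∀ f : C(G m, ℂ), L f = 0 := by
      intro f
      have hclosed : IsClosed {g : C(G m, ℂ) | L g = 0} := isClosed_eq hLcont continuous_const
      have hsub : ((torusAlg m) : Set C(G m, ℂ)) ⊆ {g | L g = 0} := by
        intro g hg
        have hg2 : g ∈ span ℂ (Set.range (E (m := m))) := by
          rw [← torusAlg_coe m]
          exact hg
        exact hLspan g hg2
      have hfmem : f ∈ closure ((torusAlg m) : Set C(G m, ℂ)) := by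
        have h5 : f ∈ (torusAlg m).topologicalClosure := by
          rw [torusAlg_closure_eq_top]; trivial
        exact h5
      exact closure_minimal hsub hclosed hfmem
    -- Urysohn function separating the closure from y₀
    obtain ⟨f, hf0, hf1, hf01⟩ := exists_continuous_zero_one_of_isClosed
      (isClosed_closure (s := Set.range ψ)) isClosed_singleton
      (Set.disjoint_singleton_right.mpr hy₀)
    set F : C(G m, ℂ) := (⟨Complex.ofReal, Complex.continuous_ofReal⟩ : C(ℝ, ℂ)).comp f with hFdef
    have hLF : (∫ z : ↥K, F ((0 : G m) + ↑z) ∂μ) - (∫ z : ↥K, F (y₀ + ↑z) ∂μ) = 0 := hzero F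
    have hleft : (∫ z : ↥K, F ((0 : G m) + ↑z) ∂μ) = 0 := by
      have hz : ∀ z : ↥K, F ((0 : G m) + ↑z) = 0 := by
        intro z
        have hzc : ((z : G m)) ∈ closure (Set.range ψ) := z.2
        rw [zero_add, hFdef]
        simp [hf0 hzc]
      rw [integral_congr_ae (Filter.Eventually.of_forall hz)]
      simp
    have hright : (∫ z : ↥K, f (y₀ + ↑z) ∂μ) = 0 := by
      have h8 : (∫ z : ↥K, F (y₀ + ↑z) ∂μ) = ((∫ z : ↥K, f (y₀ + ↑z) ∂μ : ℝ) : ℂ) := by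
        show (∫ z : ↥K, ((f (y₀ + ↑z) : ℝ) : ℂ) ∂μ) = _
        exact integral_ofReal
      rw [hleft] at hLF
      have h9 : (∫ z : ↥K, F (y₀ + ↑z) ∂μ) = 0 := by
        have h10 := sub_eq_zero.mp hLF
        rw [← h10]
      rw [h8] at h9
      exact_mod_cast h9
    have hint_f : Integrable (fun z : ↥K => f (y₀ + ↑z)) μ :=
      (f.continuous.comp (continuous_const.add continuous_subtype_val)
        ).integrable_of_hasCompactSupport (HasCompactSupport.of_compactSpace _)
    have hae : (fun z : ↥K => f (y₀ + ↑z)) =ᵐ[μ] 0 :=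
      (integral_eq_zero_iff_of_nonneg (fun z => (hf01 _).1) hint_f).mp hright
    have heq0 : (fun z : ↥K => f (y₀ + ↑z)) = 0 :=
      ((f.continuous.comp (continuous_const.add continuous_subtype_val)
        ).ae_eq_iff_eq μ continuous_const).mp hae
    have hcontr := congrFun heq0 ⟨0, K.zero_mem⟩
    have hy1 : f y₀ = 1 := hf1 rfl
    rw [show ((⟨0, K.zero_mem⟩ : ↥K) : G m) = 0 from rfl] at hcontr
    simp only [add_zero, hy1, Pi.zero_apply] at hcontr
    exact one_ne_zero hcontr

end
end

section
/- Let M ∈ ℝ^{m×n} and ψ = ρ_m ∘ M : ℝⁿ → 𝕋^m. Then the kernel of ψ is topologically isomorphic to ℝ^{n − rank M} × ℤ^{r(M)}, where r(M) is the rank of the subgroup ℤ^m ∩ M ℝⁿ. -/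
open Module


/-- For `M ∈ ℝ^{m×n}` and `ψ = ρ_m ∘ M : ℝⁿ → 𝕋^m`, the kernel
`K = {x : Mx ∈ ℤ^m}` of `ψ` is topologically isomorphic to
`ℝ^{n - rank M} × ℤ^{r(M)}`, where `r(M)` is the rank of `ℤ^m ∩ Mℝⁿ`. -/
theorem stmt2 (m n : ℕ) (M : Matrix (Fin m) (Fin n) ℝ)
    (K : AddSubgroup (Fin n → ℝ))
    (hK : ∀ x, x ∈ K ↔ ∀ i, ∃ z : ℤ, M.mulVec x i = (z : ℝ))
    (L : AddSubgroup (Fin m → ℝ))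
    (hL : ∀ y, y ∈ L ↔ (∃ x : Fin n → ℝ, M.mulVec x = y) ∧ ∀ i, ∃ z : ℤ, y i = (z : ℝ)) :
    ∃ e : K ≃+ ((Fin (n - M.rank) → ℝ) ×
        (Fin (Module.finrank ℤ (AddSubgroup.toIntSubmodule L)) → ℤ)),
      Continuous e ∧ Continuous e.symm := by
  classical
  set L' := AddSubgroup.toIntSubmodule L with hL'
  -- every element of L has integer coordinates
  have hint : ∀ y : L', ∀ i, ∃ z : ℤ, (y : Fin m → ℝ) i = (z : ℝ) :=
    fun y i => ((hL y).mp y.2).2 i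
  -- the floor map into ℤ^m
  have hfloor : ∀ y : L', ∀ i, ((⌊(y : Fin m → ℝ) i⌋ : ℤ) : ℝ) = (y : Fin m → ℝ) i := by
    intro y i
    obtain ⟨z, hz⟩ := hint y i
    rw [hz, Int.floor_intCast]
  let g : L' →ₗ[ℤ] (Fin m → ℤ) :=
    { toFun := fun y i => ⌊(y : Fin m → ℝ) i⌋
      map_add' := by
        intro a b
        funext i
        obtain ⟨za, hza⟩ := hint a i
        obtain ⟨zb, hzb⟩ := hint b i
        show ⌊((a : Fin m → ℝ) + (b : Fin m → ℝ)) i⌋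
            = ⌊(a : Fin m → ℝ) i⌋ + ⌊(b : Fin m → ℝ) i⌋
        rw [Pi.add_apply, hza, hzb, ← Int.cast_add, Int.floor_intCast, Int.floor_intCast,
          Int.floor_intCast]
      map_smul' := by
        intro c a
        funext i
        obtain ⟨za, hza⟩ := hint a i
        show ⌊(c • (a : Fin m → ℝ)) i⌋ = c • ⌊(a : Fin m → ℝ) i⌋
        have hsm : c • ((za : ℤ) : ℝ) = ((c * za : ℤ) : ℝ) := by
          push_cast [zsmul_eq_mul]; ring
        rw [Pi.smul_apply, hza, hsm, Int.floor_intCast, Int.floor_intCast, smul_eq_mul] }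
  have hg : Function.Injective g := by
    intro a b hab
    ext i
    rw [← hfloor a i, ← hfloor b i]
    exact_mod_cast congrFun hab i
  haveI : Module.Finite ℤ L' := Module.Finite.of_injective g hg
  haveI : Module.Free ℤ L' := inferInstance
  set r0 := Module.finrank ℤ L' with hr0
  let b : Basis (Fin r0) ℤ L' := Module.finBasis ℤ L'
  -- the kernel submodule
  set Ker := LinearMap.ker M.mulVecLin with hKer
  have hKerK : ∀ v ∈ Ker, v ∈ K := by
    intro v hv
    rw [hK]
    intro i
    have h0 : M.mulVec v = 0 := by
      have h1 := (LinearMap.mem_ker).mp hv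
      rwa [Matrix.mulVecLin_apply] at h1
    exact ⟨0, by rw [h0]; simp⟩
  -- the map φ : K → L'
  have hmem : ∀ x : K, M.mulVec (x : Fin n → ℝ) ∈ L' := by
    intro x
    exact (hL _).mpr ⟨⟨x, rfl⟩, (hK x).mp x.2⟩
  let φ : K → L' := fun x => ⟨M.mulVec (x : Fin n → ℝ), hmem x⟩
  have hφadd : ∀ x y : K, φ (x + y) = φ x + φ y := by
    intro x y
    apply Subtype.ext
    show M.mulVec _ = _
    simp [Matrix.mulVec_add]
    rfl
  have hφsurj : Function.Surjective φ := by
    intro y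
    obtain ⟨⟨x, hx⟩, hzy⟩ := (hL y).mp y.2
    refine ⟨⟨x, (hK x).mpr (by rw [hx]; exact hzy)⟩, Subtype.ext hx⟩
  -- section
  choose s hs using fun i => hφsurj (b i)
  let σ : (Fin r0 → ℤ) → K := fun c => ∑ i, c i • s i
  have hσadd : ∀ c d, σ (c + d) = σ c + σ d := by
    intro c d
    simp only [σ, Pi.add_apply, add_zsmul, Finset.sum_add_distrib]
  have hφzsmul : ∀ (z : ℤ) (x : K), φ (z • x) = z • φ x := by
    intro z x
    apply Subtype.ext
    have h := map_zsmul M.mulVecLin z (x : Fin n → ℝ)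
    rw [Matrix.mulVecLin_apply, Matrix.mulVecLin_apply] at h
    have hc : ((z • x : K) : Fin n → ℝ) = z • (x : Fin n → ℝ) := rfl
    show M.mulVec ((z • x : K) : Fin n → ℝ) = ((z • φ x : L') : Fin m → ℝ)
    rw [hc, h]
    simp
    rfl
  have hφsum : ∀ (c : Fin r0 → ℤ), φ (σ c) = ∑ i, c i • b i := by
    intro c
    have hφ0 : φ 0 = 0 := by
      apply Subtype.ext
      show M.mulVec _ = _
      simp
    have key : ∀ (t : Finset (Fin r0)), φ (∑ i ∈ t, c i • s i) = ∑ i ∈ t, c i • b i := by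
      intro t
      induction t using Finset.induction with
      | empty => simpa using hφ0
      | insert _ _ hnot ih =>
        rw [Finset.sum_insert hnot, Finset.sum_insert hnot, hφadd, hφzsmul, hs, ih]
    exact key Finset.univ
  -- the coordinate map
  let p : K → (Fin r0 → ℤ) := fun x => b.equivFun (φ x)
  have hpσ : ∀ c, p (σ c) = c := by
    intro c
    have h1 : φ (σ c) = b.equivFun.symm c := by
      rw [hφsum, Basis.equivFun_symm_apply]
    show b.equivFun (φ (σ c)) = c
    rw [h1, LinearEquiv.apply_symm_apply]
  have hpadd : ∀ x y, p (x + y) = p x + p y := by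
    intro x y
    simp [p, hφadd]
  -- x - σ (p x) lies in Ker
  have hker : ∀ x : K, ((x : Fin n → ℝ) - ((σ (p x) : K) : Fin n → ℝ)) ∈ Ker := by
    intro x
    have : φ (σ (p x)) = φ x := by
      rw [hφsum]
      show ∑ i, b.equivFun (φ x) i • b i = φ x
      rw [← Basis.equivFun_symm_apply, LinearEquiv.symm_apply_apply]
    have h2 : M.mulVec ((σ (p x) : K) : Fin n → ℝ) = M.mulVec (x : Fin n → ℝ) :=
      congrArg Subtype.val this
    rw [LinearMap.mem_ker]
    simp [Matrix.mulVecLin_apply, Matrix.mulVec_sub, h2]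
  -- finrank of Ker
  have hrankKer : finrank ℝ Ker = n - M.rank := by
    have h1 := LinearMap.finrank_range_add_finrank_ker (M.mulVecLin)
    rw [Module.finrank_fin_fun] at h1
    have h2 : M.rank = finrank ℝ (LinearMap.range M.mulVecLin) := rfl
    rw [hKer]
    omega
  let ε : Ker ≃L[ℝ] (Fin (n - M.rank) → ℝ) :=
    ContinuousLinearEquiv.ofFinrankEq (by rw [hrankKer, Module.finrank_fin_fun])
  -- membership of invFun output
  have hinvmem : ∀ (v : Ker) (c : Fin r0 → ℤ),
      ((v : Fin n → ℝ) + ((σ c : K) : Fin n → ℝ)) ∈ K :=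
    fun v c => K.add_mem (hKerK _ v.2) (σ c).2
  -- p of the invFun output is c, and the Ker part is v
  have hpinv : ∀ (v : Ker) (c : Fin r0 → ℤ),
      p ⟨(v : Fin n → ℝ) + ((σ c : K) : Fin n → ℝ), hinvmem v c⟩ = c := by
    intro v c
    have hφeq : φ ⟨(v : Fin n → ℝ) + ((σ c : K) : Fin n → ℝ), hinvmem v c⟩ = φ (σ c) := by
      apply Subtype.ext
      show M.mulVec _ = M.mulVec _
      have hv0 : M.mulVec (v : Fin n → ℝ) = 0 := v.2
      simp [Matrix.mulVec_add, hv0]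
    show b.equivFun (φ _) = c
    rw [hφeq]
    exact hpσ c
  -- discreteness of L'
  haveI : DiscreteTopology L' := by
    rw [discreteTopology_iff_isOpen_singleton]
    intro y
    have hset : ({y} : Set L') = (Subtype.val ⁻¹' Metric.ball (y : Fin m → ℝ) 1) := by
      ext z
      simp only [Set.mem_singleton_iff, Set.mem_preimage, Metric.mem_ball]
      constructor
      · rintro rfl; simp
      · intro hz
        apply Subtype.ext
        funext i
        obtain ⟨zz, hzz⟩ := hint z i
        obtain ⟨zy, hzy⟩ := hint y i
        have hd : dist ((z : Fin m → ℝ) i) ((y : Fin m → ℝ) i) < 1 :=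
          lt_of_le_of_lt (dist_le_pi_dist _ _ i) hz
        rw [hzz, hzy, Real.dist_eq] at hd
        have h4 : |((zz - zy : ℤ) : ℝ)| < 1 := by push_cast; exact hd
        have h5 : |zz - zy| < 1 := by exact_mod_cast h4
        rw [abs_lt] at h5
        have h6 : zz = zy := by omega
        rw [hzz, hzy, h6]
    rw [hset]
    exact Metric.isOpen_ball.preimage continuous_subtype_val
  -- continuity of φ (into L' with subtype topology)
  have hφcont : Continuous φ := by
    apply Continuous.subtype_mk
    exact (M.mulVecLin.continuous_of_finiteDimensional).comp continuous_subtype_val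
  have hpcont : Continuous p :=
    (continuous_of_discreteTopology (α := L')).comp hφcont
  have hσcont : Continuous (fun c : (Fin r0 → ℤ) => ((σ c : K) : Fin n → ℝ)) :=
    continuous_of_discreteTopology
  -- build the equivalence
  refine ⟨{
      toFun := fun x => (ε ⟨(x : Fin n → ℝ) - ((σ (p x) : K) : Fin n → ℝ), hker x⟩, p x)
      invFun := fun vc => ⟨((ε.symm vc.1 : Ker) : Fin n → ℝ) + ((σ vc.2 : K) : Fin n → ℝ),
          hinvmem _ _⟩
      left_inv := ?_
      right_inv := ?_
      map_add' := ?_ }, ?_, ?_⟩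
  · intro x
    apply Subtype.ext
    show ((ε.symm (ε _) : Ker) : Fin n → ℝ) + _ = _
    rw [ε.symm_apply_apply]
    show ((x : Fin n → ℝ) - _) + _ = _
    abel
  · rintro ⟨v, c⟩
    have hp2 := hpinv (ε.symm v) c
    refine Prod.ext ?_ (by simpa using hp2)
    show ε _ = v
    have : (⟨((⟨_, hinvmem (ε.symm v) c⟩ : K) : Fin n → ℝ)
        - ((σ (p ⟨_, hinvmem (ε.symm v) c⟩) : K) : Fin n → ℝ), hker _⟩ : Ker) = ε.symm v := by
      apply Subtype.ext
      show (((ε.symm v : Ker) : Fin n → ℝ) + ((σ c : K) : Fin n → ℝ)) - _ = _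
      rw [hp2]
      abel
    rw [this, ε.apply_symm_apply]
  · intro x y
    have hps : p (x + y) = p x + p y := hpadd x y
    refine Prod.ext ?_ (by simpa using hps)
    show ε _ = ε _ + ε _
    rw [← map_add]
    congr 1
    apply Subtype.ext
    show ((x + y : K) : Fin n → ℝ) - ((σ (p (x+y)) : K) : Fin n → ℝ)
        = ((x : Fin n → ℝ) - _) + ((y : Fin n → ℝ) - _)
    rw [hps, hσadd]
    show _ - (((σ (p x) : K) : Fin n → ℝ) + ((σ (p y) : K) : Fin n → ℝ)) = _
    show ((x : Fin n → ℝ) + (y : Fin n → ℝ)) - _ = _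
    abel
  · -- continuity of e
    apply Continuous.prodMk
    · exact ε.continuous.comp <| Continuous.subtype_mk
        (continuous_subtype_val.sub (hσcont.comp hpcont)) _
    · exact hpcont
  · -- continuity of e.symm
    apply Continuous.subtype_mk
    exact ((continuous_subtype_val.comp (ε.symm.continuous.comp continuous_fst))).add
      (hσcont.comp continuous_snd)
end

section
/- Let M ∈ ℝ^{m×n} and ψ = ρ_m ∘ M : ℝⁿ → 𝕋^m. The image ψ(ℝⁿ) is a closed subgroup of 𝕋^m if and only if r(M) = rank M, i.e., the subspace Mℝⁿ is rational. -/
open Submodule Module Set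

private lemma aux_rank {E : Type*} [NormedAddCommGroup E] [NormedSpace ℝ E]
    [FiniteDimensional ℝ E] (L : Submodule ℤ E) [DiscreteTopology L] :
    Module.finrank ℤ L = Module.finrank ℝ (span ℝ (L : Set E)) := by
  let f := (span ℝ (L : Set E)).subtype
  let L₀ := L.comap (f.restrictScalars ℤ)
  have h_img : L₀.map (f.restrictScalars ℤ) = L := by
    rw [Submodule.map_comap_eq_self]
    exact fun x hx ↦ LinearMap.mem_range.mpr ⟨⟨x, Submodule.subset_span hx⟩, rfl⟩
  have hinj : Function.Injective (f.restrictScalars ℤ) := Submodule.injective_subtype _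
  have : DiscreteTopology L₀ := by
    refine DiscreteTopology.preimage_of_continuous_injective (L : Set E) ?_ (injective_subtype _)
    exact LinearMap.continuous_of_finiteDimensional f
  have : IsZLattice ℝ L₀ := ⟨by
    rw [← (Submodule.map_injective_of_injective (injective_subtype _)).eq_iff, Submodule.map_span,
      Submodule.map_top, range_subtype]
    congr 1
    exact congrArg _ (SetLike.ext'_iff.mp h_img)⟩
  have h1 : Module.finrank ℤ L₀ = Module.finrank ℝ (span ℝ (L : Set E)) := ZLattice.rank ℝ L₀
  rw [← h1]
  exact (((Submodule.equivMapOfInjective _ hinj L₀).trans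
    (LinearEquiv.ofEq _ _ h_img)).finrank_eq).symm

/-- The coordinatewise projection `ℝ^m → 𝕋^m` as an `AddMonoidHom`. -/
private noncomputable def torusCoe (m : ℕ) : (Fin m → ℝ) →+ (Fin m → AddCircle (1 : ℝ)) where
  toFun y := fun i => (y i : AddCircle (1 : ℝ))
  map_zero' := by funext i; simp
  map_add' a b := by funext i; simp

private lemma torusCoe_continuous (m : ℕ) : Continuous (torusCoe m) :=
  continuous_pi fun i => (AddCircle.continuous_mk' 1).comp (continuous_apply i)

private lemma torusCoe_eq_zero_iff (m : ℕ) (y : Fin m → ℝ) :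
    torusCoe m y = 0 ↔ ∀ i, ∃ z : ℤ, y i = (z : ℝ) := by
  rw [funext_iff]
  refine forall_congr' fun i => ?_
  show ((y i : ℝ) : AddCircle (1:ℝ)) = 0 ↔ _
  rw [AddCircle.coe_eq_zero_iff]
  constructor
  · rintro ⟨z, hz⟩; exact ⟨z, by rw [← hz, zsmul_eq_mul, mul_one]⟩
  · rintro ⟨z, hz⟩; exact ⟨z, by rw [hz, zsmul_eq_mul, mul_one]⟩

set_option maxHeartbeats 1000000 in
set_option synthInstance.maxHeartbeats 400000 in
/-- For `M ∈ ℝ^{m×n}` and `ψ = ρ_m ∘ M : ℝⁿ → 𝕋^m`, the image `ψ(ℝⁿ)` is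
closed in `𝕋^m` iff `r(M) = rank M`, where `r(M)` is the rank of the
subgroup `L = ℤ^m ∩ Mℝⁿ`. -/
theorem stmt3 (m n : ℕ) (M : Matrix (Fin m) (Fin n) ℝ)
    (L : AddSubgroup (Fin m → ℝ))
    (hL : ∀ y, y ∈ L ↔ (∃ x : Fin n → ℝ, M.mulVec x = y) ∧ ∀ i, ∃ z : ℤ, y i = (z : ℝ)) :
    IsClosed (Set.range fun x : Fin n → ℝ =>
        fun i => ((M.mulVec x i : ℝ) : AddCircle (1 : ℝ)))
      ↔ Module.finrank ℤ (AddSubgroup.toIntSubmodule L) = M.rank := by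
  classical
  set V : Submodule ℝ (Fin m → ℝ) := LinearMap.range M.mulVecLin with hV
  have hLV : ∀ y ∈ L, y ∈ V := by
    intro y hy
    obtain ⟨⟨x, hx⟩, -⟩ := (hL y).1 hy
    exact ⟨x, by simpa [Matrix.mulVecLin_apply] using hx⟩
  set J : Submodule ℤ ↥V :=
    (AddSubgroup.toIntSubmodule L).comap ((V.subtype).restrictScalars ℤ) with hJ
  have hJmem : ∀ x : ↥V, x ∈ J ↔ (x : Fin m → ℝ) ∈ L := fun x => Iff.rfl
  have hJmap : J.map ((V.subtype).restrictScalars ℤ) = AddSubgroup.toIntSubmodule L := by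
    rw [Submodule.map_comap_eq_self]
    intro y hy
    exact LinearMap.mem_range.mpr ⟨⟨y, hLV y hy⟩, rfl⟩
  -- the set in question
  have hset : (Set.range fun x : Fin n → ℝ =>
      fun i => ((M.mulVec x i : ℝ) : AddCircle (1 : ℝ)))
      = torusCoe m '' (V : Set (Fin m → ℝ)) := by
    ext t
    constructor
    · rintro ⟨x, rfl⟩
      exact ⟨M.mulVec x, ⟨x, by simp [Matrix.mulVecLin_apply]⟩, rfl⟩
    · rintro ⟨y, ⟨x, rfl⟩, rfl⟩
      exact ⟨x, by simp [Matrix.mulVecLin_apply]; rfl⟩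
  -- rank bookkeeping
  have hrank : Module.finrank ℤ (AddSubgroup.toIntSubmodule L) = Module.finrank ℤ J := by
    rw [← hJmap]
    have hinj : Function.Injective ((V.subtype).restrictScalars ℤ) :=
      Submodule.injective_subtype _
    exact ((Submodule.equivMapOfInjective _ hinj J).finrank_eq).symm
  have hMrank : M.rank = Module.finrank ℝ ↥V := rfl
  -- discreteness
  have hdiscL : DiscreteTopology (AddSubgroup.toIntSubmodule L) := by
    have hmapsto : Set.MapsTo id ((AddSubgroup.toIntSubmodule L : Submodule ℤ (Fin m → ℝ)) : Set (Fin m → ℝ))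
        ((span ℤ (Set.range (Pi.basisFun ℝ (Fin m)))) : Set (Fin m → ℝ)) := by
      intro y hy
      rw [SetLike.mem_coe, Basis.mem_span_iff_repr_mem]
      intro i
      obtain ⟨z, hz⟩ := ((hL y).1 hy).2 i
      exact ⟨z, by simp [hz]⟩
    have := ZSpan.discreteTopology_pi_basisFun (ι := Fin m)
    exact DiscreteTopology.of_continuous_injective
      (continuous_inclusion hmapsto) (Set.inclusion_injective hmapsto)
  have hdiscJ : DiscreteTopology J := by
    refine DiscreteTopology.preimage_of_continuous_injective
      ((AddSubgroup.toIntSubmodule L : Submodule ℤ (Fin m → ℝ)) : Set (Fin m → ℝ)) ?_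
      (Submodule.injective_subtype _)
    exact LinearMap.continuous_of_finiteDimensional V.subtype
  have key : IsClosed (torusCoe m '' (V : Set (Fin m → ℝ))) ↔ span ℝ (J : Set ↥V) = ⊤ := by
    constructor
    · intro h
      haveI hdiscJ' : DiscreteTopology J := hdiscJ
      set Sg : AddSubgroup (Fin m → AddCircle (1:ℝ)) :=
        AddSubgroup.map (torusCoe m) V.toAddSubgroup with hSg
      have hSgset : (Sg : Set (Fin m → AddCircle (1:ℝ)))
          = torusCoe m '' (V : Set (Fin m → ℝ)) := by
        ext t
        simp only [hSg, AddSubgroup.coe_map, Submodule.coe_toAddSubgroup]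
      haveI hScpt : CompactSpace Sg := by
        rw [← hSgset] at h
        exact isCompact_iff_compactSpace.mp h.isCompact
      let g : ↥V →+ Sg :=
        AddMonoidHom.codRestrict ((torusCoe m).comp V.subtype.toAddMonoidHom) _
          (fun v => AddSubgroup.mem_map.mpr ⟨(v : Fin m → ℝ), v.2, rfl⟩)
      have hgsurj : Function.Surjective g := by
        rintro ⟨t, ht⟩
        obtain ⟨y, hy, rfl⟩ := AddSubgroup.mem_map.mp ht
        exact ⟨⟨y, hy⟩, rfl⟩
      have hgcont : Continuous g :=
        Continuous.subtype_mk ((torusCoe_continuous m).comp continuous_subtype_val) _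
      have hopen : IsOpenMap g := AddMonoidHom.isOpenMap_of_sigmaCompact g hgsurj hgcont
      have hker : ∀ x : ↥V, g x = 0 → x ∈ J := by
        intro x hx
        have hx' : torusCoe m (x : Fin m → ℝ) = 0 := congrArg Subtype.val hx
        refine (hJmem x).2 ((hL _).2 ⟨?_, (torusCoe_eq_zero_iff m _).1 hx'⟩)
        obtain ⟨x', hx'⟩ := x.2
        exact ⟨x', by simpa [Matrix.mulVecLin_apply] using hx'⟩
      have h0U : (0 : Sg) ∈ g '' Metric.ball (0 : ↥V) 1 :=
        ⟨0, Metric.mem_ball_self one_pos, map_zero g⟩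
      obtain ⟨t, ht⟩ := isCompact_univ.elim_finite_subcover
        (fun s : Sg => (fun x => s + x) '' (g '' Metric.ball (0 : ↥V) 1))
        (fun s => (Homeomorph.addLeft s).isOpenMap _ (hopen _ Metric.isOpen_ball))
        (fun s _ => Set.mem_iUnion.mpr ⟨s, ⟨0, h0U, by simp⟩⟩)
      choose vs hvs using hgsurj
      obtain ⟨R0, hR0⟩ := (t.image fun s => ‖vs s‖).exists_le
      set c : ℝ := R0 + 1 with hc
      have hclaim : ∀ v : ↥V, ∃ l ∈ J, ‖v - l‖ ≤ c := by
        intro v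
        obtain ⟨s, hst, hmem⟩ := Set.mem_iUnion₂.mp (ht (Set.mem_univ (g v)))
        obtain ⟨u, ⟨bb, hbb, rfl⟩, hequ⟩ := hmem
        have hker0 : g (v - vs s - bb) = 0 := by
          rw [map_sub, map_sub, hvs, ← hequ]
          simp
        refine ⟨v - vs s - bb, hker _ hker0, ?_⟩
        have hveq : v - (v - vs s - bb) = vs s + bb := by abel_nf
        rw [hveq]
        have h1 : ‖vs s‖ ≤ R0 := hR0 _ (Finset.mem_image.mpr ⟨s, hst, rfl⟩)
        have h2 : ‖bb‖ ≤ 1 := by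
          have := Metric.mem_ball.mp hbb
          rw [dist_zero_right] at this
          exact this.le
        calc ‖vs s + bb‖ ≤ ‖vs s‖ + ‖bb‖ := norm_add_le _ _
          _ ≤ R0 + 1 := add_le_add h1 h2
      rw [eq_top_iff]
      intro v _
      set W := span ℝ (J : Set ↥V) with hW
      have hWclosed : IsClosed (W : Set ↥V) := Submodule.closed_of_finiteDimensional W
      have hWne : (W : Set ↥V).Nonempty := ⟨0, W.zero_mem⟩
      rw [← SetLike.mem_coe, hWclosed.mem_iff_infDist_zero hWne]
      have hle : ∀ k : ℕ, Metric.infDist v (W : Set ↥V) ≤ c / ((k : ℝ) + 1) := by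
        intro k
        obtain ⟨l, hlJ, hl⟩ := hclaim (((k : ℝ) + 1) • v)
        have hWl : ((1 : ℝ)/((k : ℝ) + 1)) • l ∈ (W : Set ↥V) :=
          W.smul_mem _ (subset_span hlJ)
        refine le_trans (Metric.infDist_le_dist_of_mem hWl) ?_
        rw [dist_eq_norm]
        have hk : ((k : ℝ) + 1) ≠ 0 := by positivity
        have heq : v - ((1 : ℝ)/((k : ℝ) + 1)) • l
            = ((1 : ℝ)/((k : ℝ) + 1)) • ((((k : ℝ) + 1)) • v - l) := by
          rw [smul_sub, smul_smul]
          field_simp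
          rw [one_smul]
        have hns := norm_smul ((1 : ℝ)/((k : ℝ) + 1)) ((((k : ℝ) + 1)) • v - l)
        rw [Real.norm_eq_abs, abs_of_pos (by positivity : (0:ℝ) < 1/((k : ℝ) + 1))] at hns
        rw [heq, hns, div_eq_mul_inv c, one_div, mul_comm c]
        exact mul_le_mul_of_nonneg_left hl (by positivity)
      have htend : Filter.Tendsto (fun k : ℕ => c / ((k : ℝ) + 1)) Filter.atTop (nhds 0) := by
        have h1 : (fun k : ℕ => c / ((k : ℝ) + 1)) = fun k : ℕ => c / (((k + 1 : ℕ) : ℝ)) := by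
          funext k; push_cast; ring
        rw [h1]
        exact (tendsto_const_div_atTop_nhds_zero_nat c).comp (Filter.tendsto_add_atTop_nat 1)
      have h0 : Metric.infDist v (W : Set ↥V) ≤ 0 := ge_of_tendsto' htend hle
      exact le_antisymm h0 Metric.infDist_nonneg
    · intro h
      haveI : IsZLattice ℝ J := ⟨h⟩
      let b₀ := Module.Free.chooseBasis ℤ J
      let b := b₀.ofZLatticeBasis ℝ J
      have hKcpt : IsCompact (closure (ZSpan.fundamentalDomain b)) :=
        (ZSpan.fundamentalDomain_isBounded b).isCompact_closure
      have himg : torusCoe m '' (V : Set (Fin m → ℝ))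
          = (fun v : ↥V => torusCoe m (v : Fin m → ℝ)) '' closure (ZSpan.fundamentalDomain b) := by
        apply Set.Subset.antisymm
        · rintro t ⟨y, hy, rfl⟩
          set x : ↥V := ⟨y, hy⟩ with hx
          refine ⟨ZSpan.fract b x, subset_closure (ZSpan.fract_mem_fundamentalDomain b x), ?_⟩
          have hfl : ((ZSpan.floor b x : ↥V)) ∈ J := by
            have h2 := (ZSpan.floor b x).2
            exact (SetLike.ext_iff.mp (b₀.ofZLatticeBasis_span ℝ) _).mp h2
          have h0 : torusCoe m ((ZSpan.floor b x : ↥V) : Fin m → ℝ) = 0 := by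
            rw [torusCoe_eq_zero_iff]
            exact ((hL _).1 ((hJmem _).1 hfl)).2
          have hsum : ZSpan.fract b x + ((ZSpan.floor b x : ↥V)) = x := by
            rw [ZSpan.fract_apply]; exact sub_add_cancel _ _
          have := congrArg (fun v : ↥V => torusCoe m (v : Fin m → ℝ)) hsum
          simpa only [Submodule.coe_add, map_add, h0, add_zero] using this
        · rintro t ⟨v, hv, rfl⟩
          exact ⟨(v : Fin m → ℝ), v.2, rfl⟩
      rw [himg]
      exact (hKcpt.image ((torusCoe_continuous m).comp continuous_subtype_val)).isClosed
  rw [hset, key, hrank, hMrank]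
  constructor
  · intro h
    rw [aux_rank J, h, finrank_top]
  · intro h
    apply Submodule.eq_top_of_finrank_eq
    rw [← aux_rank J, h]
end

section
/- Let e₁,…,e_n be the standard basis of ℝⁿ and let b ∈ ℝⁿ with Σ_j |b_j| < 1. Then Σ over all sign vectors (s₁,…,s_n) ∈ {±1}ⁿ of |det[e₁+s₁b, …, e_n+s_nb]| = 2ⁿ. -/
/-- If `Σ_j |b_j| < 1` then the sum over all sign vectors `s ∈ {±1}ⁿ` of
`|det[e₁+s₁b, …, eₙ+sₙb]|` equals `2ⁿ`. -/
theorem stmt11 (n : ℕ) (b : Fin n → ℝ) (hb : ∑ i, |b i| < 1) :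
    ∑ s : Fin n → Bool,
      |Matrix.det (Matrix.of fun i j =>
        (if i = j then (1 : ℝ) else 0) + (if s j then 1 else -1) * b i)|
      = 2 ^ n := by
  have hdet : ∀ s : Fin n → Bool,
      Matrix.det (Matrix.of fun i j =>
        (if i = j then (1 : ℝ) else 0) + (if s j then 1 else -1) * b i)
      = 1 + ∑ j, (if s j then (1 : ℝ) else -1) * b j := by
    intro s
    have hM : (Matrix.of fun i j =>
        (if i = j then (1 : ℝ) else 0) + (if s j then 1 else -1) * b i)
        = 1 + Matrix.replicateCol Unit b *
            Matrix.replicateRow Unit (fun j => if s j then (1 : ℝ) else -1) := by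
      ext i j
      simp [Matrix.one_apply, Matrix.mul_apply, mul_comm]
    rw [hM, Matrix.det_one_add_replicateCol_mul_replicateRow]
    simp [dotProduct]
  have habs : ∀ s : Fin n → Bool,
      |∑ j, (if s j then (1 : ℝ) else -1) * b j| ≤ ∑ j, |b j| := by
    intro s
    calc |∑ j, (if s j then (1 : ℝ) else -1) * b j|
        ≤ ∑ j, |(if s j then (1 : ℝ) else -1) * b j| :=
          Finset.abs_sum_le_sum_abs _ _
      _ = ∑ j, |b j| := by
          refine Finset.sum_congr rfl fun j _ => ?_
          rcases Bool.eq_false_or_eq_true (s j) with h | h <;> simp [h, abs_mul]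
  have hpos : ∀ s : Fin n → Bool,
      0 < 1 + ∑ j, (if s j then (1 : ℝ) else -1) * b j := by
    intro s
    have h3 : |∑ j, (if s j then (1 : ℝ) else -1) * b j| < 1 := lt_of_le_of_lt (habs s) hb
    have h4 := (abs_lt.mp h3).1
    linarith
  have key : ∀ j : Fin n, ∑ s : Fin n → Bool, (if s j then (1 : ℝ) else -1) = 0 := by
    intro j
    have hinv : Function.Involutive (fun s : Fin n → Bool => fun k => !(s k)) := by
      intro s; funext k; simp
    have h := Fintype.sum_bijective _ hinv.bijective
      (fun s : Fin n → Bool => (if !(s j) then (1 : ℝ) else -1))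
      (fun s : Fin n → Bool => (if s j then (1 : ℝ) else -1)) (fun s => rfl)
    have h2 : ∀ s : Fin n → Bool,
        (if !(s j) then (1 : ℝ) else -1) = -(if s j then (1 : ℝ) else -1) := by
      intro s; rcases Bool.eq_false_or_eq_true (s j) with hs | hs <;> simp [hs]
    rw [Finset.sum_congr rfl (fun s _ => h2 s), Finset.sum_neg_distrib] at h
    linarith
  calc ∑ s : Fin n → Bool,
      |Matrix.det (Matrix.of fun i j =>
        (if i = j then (1 : ℝ) else 0) + (if s j then 1 else -1) * b i)|
      = ∑ s : Fin n → Bool, (1 + ∑ j, (if s j then (1 : ℝ) else -1) * b j) := by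
        refine Finset.sum_congr rfl fun s _ => ?_
        rw [hdet s, abs_of_pos (hpos s)]
    _ = 2 ^ n := by
        rw [Finset.sum_add_distrib]
        have hz : ∑ s : Fin n → Bool, ∑ j, (if s j then (1 : ℝ) else -1) * b j = 0 := by
          rw [Finset.sum_comm]
          refine Finset.sum_eq_zero fun j _ => ?_
          rw [← Finset.sum_mul, key j, zero_mul]
        rw [hz, add_zero]
        simp [Finset.card_univ]
end

section
/- Let δ ∈ (−1,1), δ ≠ 0, and ω₁, ω₂ > 0 with ω₂/ω₁ ≤ 1. Define f(z) := e^{2πiω₁z} − e^{−2πiω₁z} + δ(e^{2πiω₂z} − e^{−2πiω₂z}) for z ∈ ℂ. Then every zero of f is real. -/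
lemma alg_key (δ sa ca sb cb p q r t : ℝ) (hδ : |δ| < 1)
    (hsbpos : 0 < sb) (hsble : sb ≤ sa) (hcb1 : 1 ≤ cb) (hcble : cb ≤ ca)
    (pyth1 : q^2 + p^2 = 1) (pyth2 : t^2 + r^2 = 1)
    (h1 : sa * p + δ * (sb * r) = 0) (h2 : ca * q + δ * (cb * t) = 0) : False := by
  have hE : sa*ca + δ^2*(sb*cb) + δ*(p*r+q*t)*(sa*cb + ca*sb) = 0 := by
    linear_combination (ca*p + δ*(cb*r))*h1 + (sa*q + δ*(sb*t))*h2
      - (sa*ca)*pyth1 - (δ^2*sb*cb)*pyth2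
  have hdnn : 0 ≤ |δ| := abs_nonneg δ
  have hd1 : |δ| * sb < sa := by nlinarith
  have hd2 : |δ| * cb < ca := by nlinarith
  have hsq : |δ|^2 = δ^2 := sq_abs δ
  have hprod : 0 < (sa - |δ| * sb) * (ca - |δ| * cb) := mul_pos (by linarith) (by linarith)
  have hsq2 : |δ|^2*(sb*cb) = δ^2*(sb*cb) := by rw [hsq]
  have hkey : |δ| * (sa*cb + ca*sb) < sa*ca + δ^2*(sb*cb) := by nlinarith [hprod, hsq2]
  have hcs : |p*r + q*t| ≤ 1 := by
    have hsq1 : (p*r + q*t)^2 ≤ 1 := by nlinarith [sq_nonneg (p*t - q*r)]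
    exact abs_le.2 ⟨by nlinarith [sq_nonneg (p*r+q*t+1)], by nlinarith [sq_nonneg (p*r+q*t-1)]⟩
  have hS : 0 < sa*cb + ca*sb := by nlinarith
  have hbound : |δ*(p*r+q*t)*(sa*cb + ca*sb)| ≤ |δ| * (sa*cb+ca*sb) := by
    rw [abs_mul, abs_mul, abs_of_pos hS]
    have h1' : |δ| * |p*r+q*t| ≤ |δ| * 1 := mul_le_mul_of_nonneg_left hcs hdnn
    nlinarith
  have h2' := (abs_le.1 hbound).1
  linarith

lemma key_real (δ a b x y : ℝ) (hδ : |δ| < 1) (hb : 0 < b) (hab : b ≤ a) (hy : 0 < y)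
    (h1 : Real.sinh (a*y) * Real.cos (a*x) + δ * (Real.sinh (b*y) * Real.cos (b*x)) = 0)
    (h2 : Real.cosh (a*y) * Real.sin (a*x) + δ * (Real.cosh (b*y) * Real.sin (b*x)) = 0) :
    False := by
  have ha : 0 < a := lt_of_lt_of_le hb hab
  have hby : 0 < b*y := by positivity
  have hay : 0 < a*y := by positivity
  refine alg_key δ (Real.sinh (a*y)) (Real.cosh (a*y)) (Real.sinh (b*y)) (Real.cosh (b*y))
    (Real.cos (a*x)) (Real.sin (a*x)) (Real.cos (b*x)) (Real.sin (b*x)) hδ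
    (Real.sinh_pos_iff.2 hby) (Real.sinh_le_sinh.2 (by nlinarith)) (Real.one_le_cosh _)
    ?_ (Real.sin_sq_add_cos_sq _) (Real.sin_sq_add_cos_sq _) h1 h2
  rw [Real.cosh_le_cosh, abs_of_pos hby, abs_of_pos hay]
  nlinarith

/-- For `δ ∈ (−1,1) \ {0}` and `ω₁, ω₂ > 0` with `ω₂/ω₁ ≤ 1`, every zero of
`f(z) = e^{2πiω₁z} − e^{−2πiω₁z} + δ(e^{2πiω₂z} − e^{−2πiω₂z})` is real. -/
theorem stmt13 (δ ω₁ ω₂ : ℝ) (hδ : δ ∈ Set.Ioo (-1 : ℝ) 1) (hδ0 : δ ≠ 0)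
    (hω₁ : 0 < ω₁) (hω₂ : 0 < ω₂) (hr : ω₂ / ω₁ ≤ 1) (z : ℂ)
    (hz : Complex.exp (((2 * Real.pi * ω₁ : ℝ) : ℂ) * Complex.I * z)
        - Complex.exp (-(((2 * Real.pi * ω₁ : ℝ) : ℂ) * Complex.I * z))
        + (δ : ℂ) * (Complex.exp (((2 * Real.pi * ω₂ : ℝ) : ℂ) * Complex.I * z)
            - Complex.exp (-(((2 * Real.pi * ω₂ : ℝ) : ℂ) * Complex.I * z))) = 0) :
    z.im = 0 := by
  have hre := congrArg Complex.re hz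
  have him := congrArg Complex.im hz
  simp [Complex.exp_re, Complex.exp_im, Complex.mul_re, Complex.mul_im] at hre him
  set a := 2 * Real.pi * ω₁ with hadef
  set b := 2 * Real.pi * ω₂ with hbdef
  set x := z.re
  set y := z.im
  have hpi := Real.pi_pos
  have hω : ω₂ ≤ ω₁ := by rwa [div_le_one hω₁] at hr
  have hb : 0 < b := by positivity
  have hab : b ≤ a := by rw [hadef, hbdef]; nlinarith
  have habs : |δ| < 1 := abs_lt.2 ⟨hδ.1, hδ.2⟩
  have h1 : Real.sinh (a*y) * Real.cos (a*x) + δ * (Real.sinh (b*y) * Real.cos (b*x)) = 0 := by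
    linear_combination (-(1:ℝ)/2)*hre + Real.cos (a*x) * Real.sinh_eq (a*y)
      + δ * Real.cos (b*x) * Real.sinh_eq (b*y)
  have h2 : Real.cosh (a*y) * Real.sin (a*x) + δ * (Real.cosh (b*y) * Real.sin (b*x)) = 0 := by
    linear_combination ((1:ℝ)/2)*him + Real.sin (a*x) * Real.cosh_eq (a*y)
      + δ * Real.sin (b*x) * Real.cosh_eq (b*y)
  rcases lt_trichotomy y 0 with hy | hy | hy
  · exfalso
    refine key_real δ a b x (-y) habs hb hab (by linarith) ?_ ?_
    · rw [mul_neg, mul_neg, Real.sinh_neg, Real.sinh_neg]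
      linear_combination -h1
    · rw [mul_neg, mul_neg, Real.cosh_neg, Real.cosh_neg]
      linear_combination h2
  · exact hy
  · exact absurd (key_real δ a b x y habs hb hab hy h1 h2) not_false
end
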